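/- Let S ⪰ σ_min(S) I with σ_min(S) < 0 and let J be any matrix. Then for any x₀, (J^r x₀)ᵀ S (J^r x₀) ≥ σ_min(S) ‖J^r‖² ‖x₀‖² for all r ≥ 0; consequently, if f(J^r x₀) ≤ (1+ε)^r f(x₀) with f(x₀) < 0 and ε > 0, then ρ(J) ≥ √(1+ε). -/

import Mathlib

open Filter Topology


lemma aux_norm_real_le_norm_complex {n : ℕ} (M : Matrix (Fin n) (Fin n) ℝ) :
    ‖Matrix.toEuclideanCLM (𝕜 := ℝ) M‖ ≤
      ‖Matrix.toEuclideanCLM (𝕜 := ℂ) (M.map Complex.ofReal)‖ := by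
  refine ContinuousLinearMap.opNorm_le_bound _ (norm_nonneg _) fun x => ?_
  set xc : EuclideanSpace ℂ (Fin n) :=
    (WithLp.equiv 2 (Fin n → ℂ)).symm (fun i => (x i : ℂ)) with hxcdef
  have hxc : ‖xc‖ = ‖x‖ := by
    simp [EuclideanSpace.norm_eq, hxcdef]
  have happ : ∀ i, (Matrix.toEuclideanCLM (𝕜 := ℂ) (M.map Complex.ofReal) xc) i
      = ((Matrix.toEuclideanCLM (𝕜 := ℝ) M x) i : ℂ) := by
    intro i
    have h1 : Matrix.toEuclideanCLM (𝕜 := ℂ) (M.map Complex.ofReal) xc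
        = (WithLp.equiv 2 (Fin n → ℂ)).symm
            (Matrix.toLin' (M.map Complex.ofReal) (fun i => (x i : ℂ))) :=
      rfl
    have h2 : Matrix.toEuclideanCLM (𝕜 := ℝ) M x
        = (WithLp.equiv 2 (Fin n → ℝ)).symm
            (Matrix.toLin' M (WithLp.equiv 2 (Fin n → ℝ) x)) := by
      conv_lhs => rw [← (WithLp.equiv 2 (Fin n → ℝ)).symm_apply_apply x]
      exact rfl
    rw [h1, h2]
    simp only [Matrix.toLin'_apply]
    exact (RingHom.map_mulVec Complex.ofRealHom M (fun i => x i) i).symm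
  have hnorm : ‖Matrix.toEuclideanCLM (𝕜 := ℝ) M x‖
      = ‖Matrix.toEuclideanCLM (𝕜 := ℂ) (M.map Complex.ofReal) xc‖ := by
    rw [EuclideanSpace.norm_eq, EuclideanSpace.norm_eq]
    congr 1
    refine Finset.sum_congr rfl fun i _ => ?_
    rw [happ i]
    simp
  calc ‖Matrix.toEuclideanCLM (𝕜 := ℝ) M x‖
      = ‖Matrix.toEuclideanCLM (𝕜 := ℂ) (M.map Complex.ofReal) xc‖ := hnorm
    _ ≤ ‖Matrix.toEuclideanCLM (𝕜 := ℂ) (M.map Complex.ofReal)‖ * ‖xc‖ :=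
        ContinuousLinearMap.le_opNorm _ _
    _ = ‖Matrix.toEuclideanCLM (𝕜 := ℂ) (M.map Complex.ofReal)‖ * ‖x‖ := by rw [hxc]

lemma aux_spectralRadius_ge {A : Type*} [NormedRing A] [NormedAlgebra ℂ A]
    [CompleteSpace A] (a : A) {c ρ₀ : ℝ} (hc : 0 < c) (hρ : 0 ≤ ρ₀)
    (h : ∀ r : ℕ, c * ρ₀ ^ r ≤ ‖a ^ r‖) :
    ENNReal.ofReal ρ₀ ≤ spectralRadius ℂ a := by
  have hmain := spectrum.pow_norm_pow_one_div_tendsto_nhds_spectralRadius a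
  have hreal : Tendsto (fun r : ℕ => c ^ (1 / (r : ℝ)) * ρ₀) atTop (𝓝 ρ₀) := by
    have h1 : Tendsto (fun r : ℕ => (1 / (r : ℝ))) atTop (𝓝 0) :=
      tendsto_one_div_atTop_nhds_zero_nat
    have h2 : Tendsto (fun r : ℕ => c ^ (1 / (r : ℝ))) atTop (𝓝 1) := by
      have := (Real.continuousAt_const_rpow (b := (0:ℝ)) hc.ne').tendsto.comp h1
      simpa [Real.rpow_zero, Function.comp_def] using this
    simpa using h2.mul_const ρ₀
  have hb : Tendsto (fun r : ℕ => ENNReal.ofReal (c ^ (1 / (r : ℝ)) * ρ₀)) atTop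
      (𝓝 (ENNReal.ofReal ρ₀)) := (ENNReal.continuous_ofReal.tendsto ρ₀).comp hreal
  refine le_of_tendsto_of_tendsto hb hmain ?_
  filter_upwards [eventually_gt_atTop 0] with r hr
  apply ENNReal.ofReal_le_ofReal
  have hrne : (r : ℝ) ≠ 0 := Nat.cast_ne_zero.mpr hr.ne'
  have heq : c ^ (1 / (r : ℝ)) * ρ₀ = (c * ρ₀ ^ r) ^ (1 / (r : ℝ)) := by
    rw [Real.mul_rpow hc.le (by positivity)]
    congr 1
    rw [← Real.rpow_natCast ρ₀ r, ← Real.rpow_mul hρ, mul_one_div_cancel hrne,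
      Real.rpow_one]
  rw [heq]
  exact Real.rpow_le_rpow (by positivity) (h r) (by positivity)


open scoped RealInnerProductSpace


/-- If `S ⪰ σ I` with `σ < 0` then `f(Jʳx₀) ≥ σ ‖Jʳ‖² ‖x₀‖²`; consequently
if `f(Jʳx₀) ≤ (1+ε)ʳ f(x₀)` with `f(x₀) < 0`, `ε > 0`, then
`ρ(J) ≥ √(1+ε)`. -/
theorem quadratic_divergence_spectral_radius
    (n : ℕ) (S J : Matrix (Fin n) (Fin n) ℝ) (hS : S.IsSymm)
    (σ : ℝ) (hσ : σ < 0)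
    (hlower : ∀ x : EuclideanSpace ℝ (Fin n),
      σ * ‖x‖ ^ 2 ≤ ⟪x, (Matrix.toEuclideanCLM (𝕜 := ℝ) S) x⟫)
    (x₀ : EuclideanSpace ℝ (Fin n)) (ε : ℝ) (hε : 0 < ε)
    (hf0 : ⟪x₀, (Matrix.toEuclideanCLM (𝕜 := ℝ) S) x₀⟫ < 0)
    (hrec : ∀ r : ℕ,
      ⟪((Matrix.toEuclideanCLM (𝕜 := ℝ) J) ^ r) x₀,
        (Matrix.toEuclideanCLM (𝕜 := ℝ) S)
          (((Matrix.toEuclideanCLM (𝕜 := ℝ) J) ^ r) x₀)⟫ ≤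
        (1 + ε) ^ r * ⟪x₀, (Matrix.toEuclideanCLM (𝕜 := ℝ) S) x₀⟫) :
    (∀ r : ℕ,
      σ * (‖(Matrix.toEuclideanCLM (𝕜 := ℝ) J) ^ r‖ ^ 2 * ‖x₀‖ ^ 2) ≤
        ⟪((Matrix.toEuclideanCLM (𝕜 := ℝ) J) ^ r) x₀,
          (Matrix.toEuclideanCLM (𝕜 := ℝ) S)
            (((Matrix.toEuclideanCLM (𝕜 := ℝ) J) ^ r) x₀)⟫) ∧
    ENNReal.ofReal (Real.sqrt (1 + ε)) ≤
      spectralRadius ℂ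
        (Matrix.toEuclideanCLM (𝕜 := ℂ) (J.map Complex.ofReal)) := by
  have part1 : ∀ r : ℕ,
      σ * (‖(Matrix.toEuclideanCLM (𝕜 := ℝ) J) ^ r‖ ^ 2 * ‖x₀‖ ^ 2) ≤
        ⟪((Matrix.toEuclideanCLM (𝕜 := ℝ) J) ^ r) x₀,
          (Matrix.toEuclideanCLM (𝕜 := ℝ) S)
            (((Matrix.toEuclideanCLM (𝕜 := ℝ) J) ^ r) x₀)⟫ := by
    intro r
    have h1 := hlower (((Matrix.toEuclideanCLM (𝕜 := ℝ) J) ^ r) x₀)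
    have h2 : ‖((Matrix.toEuclideanCLM (𝕜 := ℝ) J) ^ r) x₀‖ ^ 2 ≤
        ‖(Matrix.toEuclideanCLM (𝕜 := ℝ) J) ^ r‖ ^ 2 * ‖x₀‖ ^ 2 := by
      rw [← mul_pow]
      exact pow_le_pow_left₀ (norm_nonneg _)
        (((Matrix.toEuclideanCLM (𝕜 := ℝ) J) ^ r).le_opNorm x₀) 2
    nlinarith [h1, h2]
  refine ⟨part1, ?_⟩
  -- x₀ ≠ 0
  have hx₀ : x₀ ≠ 0 := by
    intro h
    rw [h] at hf0
    simp at hf0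
  have hx2 : (0:ℝ) < ‖x₀‖ ^ 2 := pow_pos (norm_pos_iff.mpr hx₀) 2
  set f₀ := ⟪x₀, (Matrix.toEuclideanCLM (𝕜 := ℝ) S) x₀⟫ with hf₀def
  have hKpos : 0 < f₀ / σ / ‖x₀‖ ^ 2 := div_pos (div_pos_of_neg_of_neg hf0 hσ) hx2
  set c := Real.sqrt (f₀ / σ / ‖x₀‖ ^ 2) with hcdef
  have hc : 0 < c := Real.sqrt_pos.mpr hKpos
  have hρ : (0:ℝ) ≤ Real.sqrt (1 + ε) := Real.sqrt_nonneg _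
  -- key norm lower bound
  have hkey : ∀ r : ℕ, c * Real.sqrt (1 + ε) ^ r ≤
      ‖(Matrix.toEuclideanCLM (𝕜 := ℝ) J) ^ r‖ := by
    intro r
    set N := ‖(Matrix.toEuclideanCLM (𝕜 := ℝ) J) ^ r‖ with hN
    have h3 : σ * (N ^ 2 * ‖x₀‖ ^ 2) ≤ (1 + ε) ^ r * f₀ := (part1 r).trans (hrec r)
    have h4 : (1 + ε) ^ r * f₀ / σ ≤ N ^ 2 * ‖x₀‖ ^ 2 := by
      rw [div_le_iff_of_neg hσ]
      nlinarith [h3]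
    have h5 : f₀ / σ / ‖x₀‖ ^ 2 * (1 + ε) ^ r ≤ N ^ 2 := by
      rw [div_mul_eq_mul_div, div_le_iff₀ hx2]
      have : f₀ / σ * (1 + ε) ^ r = (1 + ε) ^ r * f₀ / σ := by ring
      linarith [h4, this.le]
    have hc2 : c ^ 2 = f₀ / σ / ‖x₀‖ ^ 2 := Real.sq_sqrt hKpos.le
    have hs2 : (Real.sqrt (1 + ε) ^ r) ^ 2 = (1 + ε) ^ r := by
      rw [← pow_mul, mul_comm r 2, pow_mul, Real.sq_sqrt (by linarith : (0:ℝ) ≤ 1 + ε)]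
    have hsq : (c * Real.sqrt (1 + ε) ^ r) ^ 2 ≤ N ^ 2 := by
      rw [mul_pow, hc2, hs2]; exact h5
    have hN0 : 0 ≤ N := norm_nonneg _
    nlinarith [hsq, hN0, mul_nonneg hc.le (pow_nonneg hρ r)]
  -- transfer to the complex operator
  have hkeyC : ∀ r : ℕ, c * Real.sqrt (1 + ε) ^ r ≤
      ‖(Matrix.toEuclideanCLM (𝕜 := ℂ) (J.map Complex.ofReal)) ^ r‖ := by
    intro r
    refine (hkey r).trans ?_
    have e1 : (Matrix.toEuclideanCLM (𝕜 := ℝ) J) ^ r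
        = Matrix.toEuclideanCLM (𝕜 := ℝ) (J ^ r) := (map_pow _ _ _).symm
    have e2 : (Matrix.toEuclideanCLM (𝕜 := ℂ) (J.map Complex.ofReal)) ^ r
        = Matrix.toEuclideanCLM (𝕜 := ℂ) ((J ^ r).map Complex.ofReal) := by
      rw [← map_pow]
      congr 1
      have : J.map Complex.ofReal = Complex.ofRealHom.mapMatrix J := rfl
      rw [this, ← map_pow]
      rfl
    rw [e1, e2]
    exact aux_norm_real_le_norm_complex (J ^ r)
  exact aux_spectralRadius_ge _ hc hρ hkeyC
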